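/- Let x̄ be a feasible point for problem (VP), d, z ∈ ℝ^s, and suppose: (i) z ∈ A(x̄,d); (ii) each g_i with i ∈ I(x̄) is Fréchet differentiable at x̄ and ∇g_i(x̄)d < 0 for every i ∈ I(x̄) \ K(x̄,d); (iii) each g_i with i ∉ I(x̄) is continuous at x̄. Then there exists δ > 0 such that x̄ + td + 0.5t²z ∈ S for all t ∈ (0,δ). -/

import Mathlib

open Set Filter Topology

noncomputable section

/-- The set `A(x,d)` for the constraints `g`. -/
def setA {s : ℕ} (m : ℕ) (g : Fin m → (Fin s → ℝ) → ℝ) (x d : Fin s → ℝ) :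
    Set (Fin s → ℝ) :=
  {z | ∀ i, g i x = 0 → fderiv ℝ (g i) x d = 0 →
    ∃ δ > 0, ∀ t ∈ Ioo (0 : ℝ) δ, g i (x + t • d + (t ^ 2 / 2) • z) ≤ 0}

/-- if `x̄` is feasible, `z ∈ A(x̄,d)`, the active constraints are Fréchet
differentiable at `x̄` with `∇g_i(x̄)d < 0` for every `i ∈ I(x̄) \ K(x̄,d)`, and the nonactive
constraints are continuous at `x̄`, then `x̄ + td + 0.5 t² z` is feasible for all small `t > 0`. -/
theorem statement6 {s m : ℕ} (X : Set (Fin s → ℝ)) (hX : IsOpen X)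
    (g : Fin m → (Fin s → ℝ) → ℝ) (xbar d z : Fin s → ℝ)
    (hxX : xbar ∈ X) (hfeas : ∀ i, g i xbar ≤ 0)
    (hA : z ∈ setA m g xbar d)
    (hdiff : ∀ i, g i xbar = 0 → DifferentiableAt ℝ (g i) xbar)
    (hneg : ∀ i, g i xbar = 0 → fderiv ℝ (g i) xbar d ≠ 0 → fderiv ℝ (g i) xbar d < 0)
    (hCont : ∀ i, g i xbar ≠ 0 → ContinuousAt (g i) xbar) :
    ∃ δ > 0, ∀ t ∈ Ioo (0 : ℝ) δ,
      xbar + t • d + (t ^ 2 / 2) • z ∈ X ∧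
      ∀ i, g i (xbar + t • d + (t ^ 2 / 2) • z) ≤ 0 := by
  set c : ℝ → (Fin s → ℝ) := fun t => xbar + t • d + (t ^ 2 / 2) • z with hc
  have hc0 : c 0 = xbar := by simp [hc]
  have hccont : Continuous c := by
    apply Continuous.add
    · exact continuous_const.add (continuous_id.smul continuous_const)
    · exact ((continuous_id.pow 2).div_const 2).smul continuous_const
  have hcderiv : HasDerivAt c d 0 := by
    have h1 : HasDerivAt (fun t : ℝ => t • d) ((1:ℝ) • d) 0 :=
      (hasDerivAt_id (0:ℝ)).smul_const d
    have h2 : HasDerivAt (fun t : ℝ => (t ^ 2 / 2) • z) (((2 * 0 ^ 1 * 1) / 2 : ℝ) • z) 0 := by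
      exact (((hasDerivAt_id (0:ℝ)).pow 2).div_const 2).smul_const z
    have := ((hasDerivAt_const (0:ℝ) xbar).add h1).add h2
    simp at this
    exact this
  suffices h : ∀ᶠ t in 𝓝[>] (0:ℝ), c t ∈ X ∧ ∀ i, g i (c t) ≤ 0 by
    rw [eventually_iff, mem_nhdsGT_iff_exists_Ioo_subset] at h
    obtain ⟨u, hu, hsub⟩ := h
    exact ⟨u, hu, fun t ht => hsub ht⟩
  have hXev : ∀ᶠ t in 𝓝[>] (0:ℝ), c t ∈ X := by
    have hx' : c 0 ∈ X := hc0.symm ▸ hxX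
    have : ∀ᶠ t in 𝓝 (0:ℝ), c t ∈ X :=
      (hccont.continuousAt (x := (0:ℝ))).eventually_mem (hX.mem_nhds hx')
    exact this.filter_mono nhdsWithin_le_nhds
  have hgev : ∀ i, ∀ᶠ t in 𝓝[>] (0:ℝ), g i (c t) ≤ 0 := by
    intro i
    by_cases hi : g i xbar = 0
    · by_cases hk : fderiv ℝ (g i) xbar d = 0
      · obtain ⟨δ, hδ, hδ'⟩ := hA i hi hk
        filter_upwards [Ioo_mem_nhdsGT_of_mem (by constructor <;> simp [hδ] : (0:ℝ) ∈ Ico 0 δ)]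
          with t ht using hδ' t ht
      · have hlt := hneg i hi hk
        have hgd : HasFDerivAt (g i) (fderiv ℝ (g i) xbar) (c 0) :=
          hc0.symm ▸ (hdiff i hi).hasFDerivAt
        have hφ : HasDerivAt (fun t => g i (c t)) (fderiv ℝ (g i) xbar d) 0 :=
          hgd.comp_hasDerivAt 0 hcderiv
        have hslope := hasDerivAt_iff_tendsto_slope.mp hφ
        have hev : ∀ᶠ t in 𝓝[≠] (0:ℝ), slope (fun t => g i (c t)) 0 t < 0 :=
          hslope.eventually_lt_const hlt
        have hmono : 𝓝[>] (0:ℝ) ≤ 𝓝[≠] (0:ℝ) :=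
          nhdsWithin_mono _ (fun x hx => ne_of_gt hx)
        filter_upwards [hev.filter_mono hmono, self_mem_nhdsWithin] with t ht ht'
        have ht' : (0:ℝ) < t := ht'
        rw [slope_def_field] at ht
        have : (g i (c t) - g i (c 0)) / (t - 0) < 0 := ht
        rw [hc0, hi, sub_zero, sub_zero] at this
        have h3 := mul_neg_of_neg_of_pos this ht'
        rw [div_mul_cancel₀ _ (ne_of_gt ht')] at h3
        exact le_of_lt h3
    · have hlt : g i xbar < 0 := lt_of_le_of_ne (hfeas i) hi
      have hgc : ContinuousAt (g i) (c 0) := hc0.symm ▸ hCont i hi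
      have : Tendsto (fun t => g i (c t)) (𝓝 (0:ℝ)) (𝓝 (g i xbar)) := by
        have := hgc.comp (hccont.continuousAt (x := (0:ℝ)))
        have h2 : (g i ∘ c) 0 = g i xbar := by simp [Function.comp_def, hc0]
        exact h2 ▸ this
      have := this.eventually_lt_const hlt |>.mono (fun t ht => le_of_lt ht)
      exact this.filter_mono nhdsWithin_le_nhds
  have hall : ∀ᶠ t in 𝓝[>] (0:ℝ), ∀ i, g i (c t) ≤ 0 := eventually_all.mpr hgev
  filter_upwards [hXev, hall] with t h1 h2 using ⟨h1, h2⟩
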